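/- Let k be an infinite field, R = k[x,y] localized at m = (x,y), and I = (x⁴, x³y, xy³, y⁴). Then I^n = m^{4n} for all n ≥ 2, μ(I) = 4, and the Hilbert series of the fiber cone is H(F(I), λ) = 1 + 4λ + Σ_{n≥2}(4n+1)λ^n = (1 + 2λ + 2λ² − λ³)/(1 − λ)²; in particular the numerator has a negative coefficient. -/

import Mathlib

open IsLocalRing

/-- The length of a module, as the Krull dimension of its lattice of submodules. -/
noncomputable def modLength (R M : Type*) [Ring R] [AddCommGroup M] [Module R M] :
    WithBot ℕ∞ :=
  Order.krullDim (Submodule R M)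

/-- The length `ℓ(P/N)` of the subquotient `P/N` of `R` determined by ideals `N ≤ P`. -/
noncomputable def qlen {R : Type*} [CommRing R] (N P : Ideal R) : WithBot ℕ∞ :=
  modLength R (↥P ⧸ (Submodule.comap P.subtype N))


open MvPolynomial

theorem spanX_eq_ker (k : Type*) [Field k] :
    (Ideal.span {(X 0 : MvPolynomial (Fin 2) k), X 1}) = RingHom.ker (constantCoeff) := by
  apply le_antisymm
  · rw [Ideal.span_le]
    rintro p (rfl | rfl) <;> simp [RingHom.mem_ker]
  · intro p hp
    have h2 : ({(X 0 : MvPolynomial (Fin 2) k), X 1} : Set _) = X '' Set.univ := by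
      ext q
      simp only [Set.image_univ, Set.mem_range, Set.mem_insert_iff, Set.mem_singleton_iff]
      constructor
      · rintro (rfl | rfl)
        exacts [⟨0, rfl⟩, ⟨1, rfl⟩]
      · rintro ⟨i, rfl⟩
        fin_cases i <;> simp
    rw [h2, mem_ideal_span_X_image]
    intro m hm
    have hm0 : m ≠ 0 := by
      rintro rfl
      rw [RingHom.mem_ker] at hp
      rw [mem_support_iff] at hm
      exact hm (by simpa [constantCoeff_eq] using hp)
    rcases Finsupp.support_nonempty_iff.mpr hm0 with ⟨i, hi⟩
    exact ⟨i, trivial, Finsupp.mem_support_iff.mp hi⟩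

/-- `(x, y)` is a prime ideal of `k[x,y]`. -/
instance spanX_isPrime (k : Type*) [Field k] :
    (Ideal.span {(X 0 : MvPolynomial (Fin 2) k), X 1}).IsPrime := by
  rw [spanX_eq_ker]
  exact RingHom.ker_isPrime _

/-- `R = k[x,y]` localized at the maximal ideal `(x, y)`. -/
abbrev Rloc (k : Type*) [Field k] :=
  Localization.AtPrime (Ideal.span {(X 0 : MvPolynomial (Fin 2) k), X 1})

/-- the image of `x` in `R`. -/
noncomputable def xx (k : Type*) [Field k] : Rloc k := algebraMap (MvPolynomial (Fin 2) k) _ (X 0)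

/-- the image of `y` in `R`. -/
noncomputable def yy (k : Type*) [Field k] : Rloc k := algebraMap (MvPolynomial (Fin 2) k) _ (X 1)

/-- the ideal `I = (x⁴, x³y, xy³, y⁴)` of `R`. -/
noncomputable def I13 (k : Type*) [Field k] : Ideal (Rloc k) :=
  Ideal.span {xx k ^ 4, xx k ^ 3 * yy k, xx k * yy k ^ 3, yy k ^ 4}


/-! ### auxiliary lemmas -/

open Module

lemma aux_krullDim_submodule (F V : Type*) [Field F] [AddCommGroup V] [Module F V]
    [FiniteDimensional F V] :
    Order.krullDim (Submodule F V) = (Module.finrank F V : WithBot ℕ∞) := by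
  apply le_antisymm
  · rw [Order.krullDim_eq_iSup_length]
    apply WithBot.coe_le_coe.mpr
    apply iSup_le
    intro p
    have key : ∀ i : Fin (p.length + 1), (i : ℕ) ≤ finrank F (p i) := by
      intro i
      induction i using Fin.induction with
      | zero => simp
      | succ j ih =>
        have hlt : p j.castSucc < p j.succ := p.step j
        have := Submodule.finrank_lt_finrank_of_lt hlt
        have : finrank F (p j.castSucc) < finrank F (p j.succ) := this
        simp only [Fin.coe_castSucc] at ih
        simp only [Fin.val_succ]
        omega
    have := key (Fin.last p.length)
    have h2 : finrank F (p (Fin.last p.length)) ≤ finrank F V := Submodule.finrank_le _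
    exact_mod_cast le_trans (by exact_mod_cast this) (by exact_mod_cast h2)
  · set d := finrank F V with hd
    let b : Basis (Fin d) F V := finBasis F V
    let f : Fin (d + 1) → Submodule F V := fun j =>
      Submodule.span F (b '' {i : Fin d | (i : ℕ) < (j : ℕ)})
    have hstep : ∀ j : Fin d, f j.castSucc < f j.succ := by
      intro j
      have hmono : f j.castSucc ≤ f j.succ := by
        apply Submodule.span_mono
        apply Set.image_mono
        intro i hi
        simp only [Set.mem_setOf_eq, Fin.coe_castSucc, Fin.val_succ] at hi ⊢
        omega
      refine lt_of_le_of_ne hmono (fun h => ?_)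
      have hmem : b j ∈ f j.succ := Submodule.subset_span ⟨j, by simp [Fin.val_succ], rfl⟩
      rw [← h] at hmem
      exact b.linearIndependent.notMem_span_image (by simp) hmem
    let p : LTSeries (Submodule F V) := ⟨d, f, hstep⟩
    have := Order.LTSeries.length_le_krullDim p
    exact_mod_cast this

lemma aux_krullDim_eq_of {R M F : Type*} [CommRing R] [AddCommGroup M] [Module R M]
    [Field F] (σ : F →+* R)
    (hred : ∀ (r : R) (x : M), ∃ c : F, r • x = σ c • x)
    {d : ℕ} (v : Fin d → M)
    (hspan : Submodule.span R (Set.range v) = ⊤)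
    (hindep : ∀ c : Fin d → F, (∑ i, σ (c i) • v i) = 0 → ∀ i, c i = 0) :
    Order.krullDim (Submodule R M) = (d : WithBot ℕ∞) := by
  letI instF : Module F M := Module.compHom M σ
  have hsmul : ∀ (c : F) (x : M), c • x = σ c • x := fun c x => rfl
  let toF : Submodule R M → Submodule F M := fun W =>
    { carrier := W
      add_mem' := fun h1 h2 => W.add_mem h1 h2
      zero_mem' := W.zero_mem
      smul_mem' := fun c x hx => by rw [hsmul]; exact W.smul_mem _ hx }
  let toR : Submodule F M → Submodule R M := fun W =>
    { carrier := W
      add_mem' := fun h1 h2 => W.add_mem h1 h2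
      zero_mem' := W.zero_mem
      smul_mem' := fun r x hx => by
        obtain ⟨c, hc⟩ := hred r x
        rw [hc, ← hsmul]
        exact W.smul_mem _ hx }
  let e : Submodule R M ≃o Submodule F M :=
    { toFun := toF
      invFun := toR
      left_inv := fun W => by ext x; exact Iff.rfl
      right_inv := fun W => by ext x; exact Iff.rfl
      map_rel_iff' := Iff.rfl }
  rw [Order.krullDim_eq_of_orderIso e]
  have hLI : LinearIndependent F v := by
    rw [Fintype.linearIndependent_iff]
    intro c hc
    exact hindep c hc
  have hsp : ⊤ ≤ Submodule.span F (Set.range v) := by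
    have h1 : Submodule.span R (Set.range v) ≤ toR (Submodule.span F (Set.range v)) :=
      Submodule.span_le.mpr (fun x hx => Submodule.subset_span hx)
    rw [hspan] at h1
    intro x _
    exact h1 Submodule.mem_top
  let b : Basis (Fin d) F M := Basis.mk hLI hsp
  haveI : FiniteDimensional F M := Module.Finite.of_basis b
  rw [aux_krullDim_submodule F M, Module.finrank_eq_card_basis b]
  simp

lemma aux_qlen_eq {R F : Type*} [CommRing R] [Field F] (σ : F →+* R)
    (N P : Ideal R) {d : ℕ} (v : Fin d → R)
    (hv : ∀ i, v i ∈ P)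
    (hred : ∀ r : R, ∃ c : F, ∀ w ∈ P, r * w - σ c * w ∈ N)
    (hPspan : P ≤ Ideal.span (Set.range v))
    (hindep : ∀ c : Fin d → F, (∑ i, σ (c i) * v i) ∈ N → ∀ i, c i = 0) :
    qlen N P = (d : WithBot ℕ∞) := by
  unfold qlen modLength
  set K := Submodule.comap P.subtype N with hK
  let q : ↥P →ₗ[R] (↥P ⧸ K) := K.mkQ
  have hq0 : ∀ u : ↥P, q u = 0 ↔ (u : R) ∈ N := by
    intro u
    rw [Submodule.mkQ_apply, Submodule.Quotient.mk_eq_zero, hK, Submodule.mem_comap]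
    rfl
  let vM : Fin d → (↥P ⧸ K) := fun i => q ⟨v i, hv i⟩
  apply aux_krullDim_eq_of σ
  · -- hred'
    intro r x
    obtain ⟨u, rfl⟩ := Submodule.mkQ_surjective K x
    obtain ⟨c, hc⟩ := hred r
    refine ⟨c, ?_⟩
    show r • q u = σ c • q u
    rw [← map_smul, ← map_smul, ← sub_eq_zero, ← map_sub, hq0]
    have : ((r • u - σ c • u : ↥P) : R) = r * (u : R) - σ c * (u : R) := by
      simp [smul_eq_mul]
    rw [this]
    exact hc _ u.2
  · -- span
    rw [eq_top_iff]
    rintro x -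
    obtain ⟨⟨w, hw⟩, rfl⟩ := Submodule.mkQ_surjective K x
    have hw' : w ∈ Ideal.span (Set.range v) := hPspan hw
    have hPv : Ideal.span (Set.range v) ≤ P :=
      Ideal.span_le.mpr (Set.range_subset_iff.mpr hv)
    have claim : ∀ (w : R) (hws : w ∈ Ideal.span (Set.range v)) (hw : w ∈ P),
        q ⟨w, hw⟩ ∈ Submodule.span R (Set.range vM) := by
      intro w hws
      induction hws using Submodule.span_induction with
      | mem x hx =>
        intro hw
        obtain ⟨i, hi⟩ := hx
        have : (⟨x, hw⟩ : ↥P) = ⟨v i, hv i⟩ := Subtype.ext hi.symm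
        rw [this]
        exact Submodule.subset_span ⟨i, rfl⟩
      | zero =>
        intro hw
        have : (⟨(0:R), hw⟩ : ↥P) = 0 := rfl
        rw [this, map_zero]
        exact Submodule.zero_mem _
      | add a b ha hb iha ihb =>
        intro hw
        have : (⟨a + b, hw⟩ : ↥P) = ⟨a, hPv ha⟩ + ⟨b, hPv hb⟩ := rfl
        rw [this, map_add]
        exact Submodule.add_mem _ (iha (hPv ha)) (ihb (hPv hb))
      | smul r a ha iha =>
        intro hw
        have : (⟨r • a, hw⟩ : ↥P) = r • ⟨a, hPv ha⟩ := rfl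
        rw [this, map_smul]
        exact Submodule.smul_mem _ _ (iha (hPv ha))
    exact claim w hw' hw
  · -- indep
    intro c hc
    apply hindep c
    have : (∑ i, σ (c i) • vM i) = q (∑ i, σ (c i) • ⟨v i, hv i⟩) := by
      rw [map_sum]
      exact Finset.sum_congr rfl fun i _ => (map_smul q (σ (c i)) _).symm
    rw [this, hq0] at hc
    have hcoe : ((∑ i, σ (c i) • (⟨v i, hv i⟩ : ↥P) : ↥P) : R) = ∑ i, σ (c i) * v i := by
      push_cast
      simp [smul_eq_mul]
    rwa [hcoe] at hc

section generic

variable {R : Type*} [CommRing R]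

lemma aux_span_pair_pow (a b : R) (n : ℕ) :
    Ideal.span {a, b} ^ n =
      Ideal.span ((fun i => a ^ i * b ^ (n - i)) '' Set.Iic n) := by
  induction n with
  | zero =>
    simp only [pow_zero, Ideal.one_eq_top]
    have h1 : ((fun i => a ^ i * b ^ (0 - i)) '' Set.Iic 0) = {1} := by
      ext x
      simp only [Set.mem_image, Set.mem_Iic, Nat.le_zero, Set.mem_singleton_iff]
      constructor
      · rintro ⟨i, rfl, rfl⟩; simp
      · rintro rfl; exact ⟨0, rfl, by simp⟩
    rw [h1, Ideal.span_singleton_one]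
  | succ n ih =>
    rw [pow_succ, ih, Ideal.span_mul_span']
    apply le_antisymm
    · rw [Ideal.span_le]
      rintro x hx
      rw [Set.mem_mul] at hx
      obtain ⟨u, hu, w, hw, rfl⟩ := hx
      obtain ⟨i, hi, rfl⟩ := hu
      simp only [Set.mem_Iic] at hi
      apply Ideal.subset_span
      rcases hw with hw | hw <;> rw [hw]
      · have h2 : a ^ i * b ^ (n - i) * a = a ^ (i + 1) * b ^ (n + 1 - (i + 1)) := by
          have h3 : n + 1 - (i + 1) = n - i := by omega
          rw [h3]; ring
        rw [h2]
        exact ⟨i + 1, by simp only [Set.mem_Iic]; omega, rfl⟩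
      · have h2 : a ^ i * b ^ (n - i) * b = a ^ i * b ^ (n + 1 - i) := by
          have h3 : n + 1 - i = (n - i) + 1 := by omega
          rw [h3]; ring
        rw [h2]
        exact ⟨i, by simp only [Set.mem_Iic]; omega, rfl⟩
    · rw [Ideal.span_le]
      rintro x ⟨i, hi, rfl⟩
      simp only [Set.mem_Iic] at hi
      apply Ideal.subset_span
      rw [Set.mem_mul]
      rcases Nat.eq_zero_or_pos i with rfl | hpos
      · refine ⟨a ^ 0 * b ^ (n - 0), ⟨0, by simp, rfl⟩, b, by simp, ?_⟩
        show a ^ 0 * b ^ (n - 0) * b = a ^ 0 * b ^ (n + 1 - 0)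
        simp [pow_succ]
      · obtain ⟨j, rfl⟩ := Nat.exists_eq_add_of_le hpos
        refine ⟨a ^ j * b ^ (n - j), ⟨j, by simp only [Set.mem_Iic]; omega, rfl⟩, a,
          by simp, ?_⟩
        show a ^ j * b ^ (n - j) * a = a ^ (1 + j) * b ^ (n + 1 - (1 + j))
        have h3 : n + 1 - (1 + j) = n - j := by omega
        have h4 : 1 + j = j + 1 := by omega
        rw [h3, h4]; ring

end generic

section poly

variable (k : Type*) [Field k]

local notation "A" => MvPolynomial (Fin 2) k
local notation "pXY" => Ideal.span {(X 0 : MvPolynomial (Fin 2) k), X 1}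

lemma aux_pXY_isMaximal : (pXY).IsMaximal := by
  haveI : (⊥ : Ideal k).IsMaximal := Ideal.bot_isMaximal
  rw [spanX_eq_ker k, RingHom.ker_eq_comap_bot]
  exact Ideal.comap_isMaximal_of_surjective _ (fun c => ⟨C c, constantCoeff_C _ c⟩)

/-- low coefficients of elements of pXY ^ b vanish -/
lemma aux_coeff_pow_eq_zero : ∀ (b : ℕ) (f : A), f ∈ (pXY) ^ b →
    ∀ m : Fin 2 →₀ ℕ, m 0 + m 1 < b → MvPolynomial.coeff m f = 0 := by
  intro b
  induction b with
  | zero => intro f _ m hm; omega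
  | succ n ih =>
    intro f hf
    rw [pow_succ] at hf
    refine Submodule.mul_induction_on hf ?_ ?_
    · intro g hg h hh m hm
      rw [MvPolynomial.coeff_mul]
      apply Finset.sum_eq_zero
      rintro ⟨u, w⟩ huw
      rw [Finset.HasAntidiagonal.mem_antidiagonal] at huw
      have hadd0 : u 0 + w 0 = m 0 := by rw [← huw]; simp
      have hadd1 : u 1 + w 1 = m 1 := by rw [← huw]; simp
      rcases Nat.eq_zero_or_pos (w 0 + w 1) with hw0 | hwpos
      · have hw : w = 0 := by
          ext i
          fin_cases i <;> simp <;> omega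
        subst hw
        have hc : MvPolynomial.coeff 0 h = 0 := by
          rw [spanX_eq_ker k] at hh
          exact hh
        rw [hc, mul_zero]
      · have hu : u 0 + u 1 < n := by omega
        rw [ih g hg u hu, zero_mul]
    · intro x y hx hy m hm
      rw [MvPolynomial.coeff_add, hx m hm, hy m hm, add_zero]

end poly

section loc

variable (k : Type*) [Field k]

local notation "A" => MvPolynomial (Fin 2) k
local notation "pXY" => (Ideal.span {(X 0 : MvPolynomial (Fin 2) k), X 1} : Ideal (MvPolynomial (Fin 2) k))
local notation "φ" => algebraMap (MvPolynomial (Fin 2) k) (Rloc k)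
local notation "mm" => IsLocalRing.maximalIdeal (Rloc k)

/-- the "coefficient field" map `k → R`. -/
noncomputable def sig : k →+* Rloc k :=
  (algebraMap (MvPolynomial (Fin 2) k) (Rloc k)).comp C

lemma aux_max_eq_map : mm = Ideal.map φ pXY :=
  (Localization.AtPrime.map_eq_maximalIdeal).symm

lemma aux_max_pow_eq_map (b : ℕ) : mm ^ b = Ideal.map φ (pXY ^ b) := by
  rw [aux_max_eq_map, Ideal.map_pow]

lemma aux_m_span : mm = Ideal.span {xx k, yy k} := by
  rw [aux_max_eq_map, Ideal.map_span]
  congr 1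
  rw [Set.image_insert_eq, Set.image_singleton]
  rfl

lemma aux_m_pow_span (n : ℕ) :
    mm ^ n = Ideal.span ((fun i => xx k ^ i * yy k ^ (n - i)) '' Set.Iic n) := by
  rw [aux_m_span, aux_span_pair_pow]

lemma aux_contract (b : ℕ) (hb : b ≠ 0) (f : A)
    (hf : φ f ∈ Ideal.map φ (pXY ^ b)) : f ∈ pXY ^ b := by
  rw [IsLocalization.mem_map_algebraMap_iff (pXY).primeCompl] at hf
  obtain ⟨⟨⟨a, ha⟩, s⟩, h⟩ := hf
  have hinj : Function.Injective (φ) :=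
    IsLocalization.injective _ (pXY).primeCompl_le_nonZeroDivisors
  have hfs : f * (s : A) = a := by
    apply hinj
    rw [map_mul]
    exact h
  have hprim : ((pXY) ^ b).IsPrimary := by
    apply Ideal.isPrimary_of_isMaximal_radical
    rw [Ideal.radical_pow _ hb, (spanX_isPrime k).radical]
    exact aux_pXY_isMaximal k
  rcases (Ideal.isPrimary_iff.mp hprim).2 (show f * (s : A) ∈ (pXY) ^ b from hfs ▸ ha)
    with h1 | h2
  · exact h1
  · exfalso
    rw [Ideal.radical_pow _ hb, (spanX_isPrime k).radical] at h2
    exact s.2 h2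

lemma aux_mem_pXY_iff (g : MvPolynomial (Fin 2) k) :
    g ∈ pXY ↔ constantCoeff g = 0 := by
  rw [spanX_eq_ker]
  exact Iff.rfl

lemma aux_res (r : Rloc k) : ∃ c : k, r - sig k c ∈ mm := by
  obtain ⟨⟨f, s⟩, hfs : IsLocalization.mk' _ f s = r⟩ := IsLocalization.mk'_surjective (pXY).primeCompl r
  have hs0 : constantCoeff (s : A) ≠ 0 := fun h0 => s.2 ((aux_mem_pXY_iff k _).mpr h0)
  obtain ⟨c, hc⟩ : ∃ c : k, c = constantCoeff f * (constantCoeff (s : A))⁻¹ := ⟨_, rfl⟩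
  refine ⟨c, ?_⟩
  have h1 : r * φ (s : A) = φ f := by
    rw [← hfs]
    exact IsLocalization.mk'_spec _ _ _
  have key : (r - sig k c) * φ (s : A) = φ (f - C c * (s : A)) := by
    rw [sub_mul, map_sub, map_mul, h1]
    rfl
  have hmem : f - C c * (s : A) ∈ pXY := by
    rw [aux_mem_pXY_iff]
    rw [map_sub, map_mul, constantCoeff_C, hc]
    field_simp
    simp
  have h2 : (r - sig k c) * φ (s : A) ∈ mm := by
    rw [key, aux_max_eq_map]
    exact Ideal.mem_map_of_mem _ hmem
  obtain ⟨u, hu⟩ := IsLocalization.map_units (Rloc k) s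
  have h3 : r - sig k c = ((r - sig k c) * φ (s : A)) * ((u⁻¹ : Units (Rloc k)) : Rloc k) := by
    rw [← hu, mul_assoc]
    simp
  rw [h3]
  exact Ideal.mul_mem_right _ _ h2

lemma aux_indep {d b : ℕ} (hb : b ≠ 0) (a e : Fin d → ℕ)
    (hdeg : ∀ i, a i + e i < b)
    (hinj : ∀ i j, a i = a j → e i = e j → i = j)
    (c : Fin d → k)
    (h : (∑ i, sig k (c i) * (xx k ^ a i * yy k ^ e i)) ∈ Ideal.map φ ((pXY) ^ b)) :
    ∀ i, c i = 0 := by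
  classical
  set u : Fin d → (Fin 2 →₀ ℕ) := fun i => Finsupp.single 0 (a i) + Finsupp.single 1 (e i)
    with hu
  have hu0 : ∀ i, u i 0 = a i := by
    intro i
    simp [hu, Finsupp.single_apply]
  have hu1 : ∀ i, u i 1 = e i := by
    intro i
    simp [hu, Finsupp.single_apply]
  have hterm : ∀ i, sig k (c i) * (xx k ^ a i * yy k ^ e i) =
      φ (monomial (u i) (c i)) := by
    intro i
    show φ (C (c i)) * (φ (X 0) ^ a i * φ (X 1) ^ e i) = _
    rw [← map_pow, ← map_pow, ← map_mul, ← map_mul]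
    congr 1
    rw [X_pow_eq_monomial, X_pow_eq_monomial, monomial_mul, one_mul, C_mul_monomial, mul_one]
  rw [Finset.sum_congr rfl (fun i _ => hterm i), ← map_sum] at h
  have hf := aux_contract k b hb _ h
  intro j
  have hdegj : (u j) 0 + (u j) 1 < b := by rw [hu0, hu1]; exact hdeg j
  have hz := aux_coeff_pow_eq_zero k b _ hf (u j) hdegj
  rw [coeff_sum] at hz
  have hcoeff : ∀ i, MvPolynomial.coeff (u j) (monomial (u i) (c i)) =
      if i = j then c i else 0 := by
    intro i
    rw [coeff_monomial]
    congr 1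
    simp only [eq_iff_iff]
    constructor
    · intro hij
      apply hinj
      · rw [← hu0, ← hu0, hij]
      · rw [← hu1, ← hu1, hij]
    · rintro rfl; rfl
  rw [Finset.sum_congr rfl (fun i _ => hcoeff i), Finset.sum_ite_eq' Finset.univ j c] at hz
  simpa using hz

end loc

section loc2

variable (k : Type*) [Field k]

local notation "A" => MvPolynomial (Fin 2) k
local notation "pXY" => (Ideal.span {(X 0 : MvPolynomial (Fin 2) k), X 1} : Ideal (MvPolynomial (Fin 2) k))
local notation "φ" => algebraMap (MvPolynomial (Fin 2) k) (Rloc k)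
local notation "mm" => IsLocalRing.maximalIdeal (Rloc k)

lemma aux_I13_le : I13 k ≤ mm ^ 4 := by
  rw [aux_m_pow_span k 4, I13, Ideal.span_le]
  rintro x (rfl | rfl | rfl | rfl)
  · exact Ideal.subset_span ⟨4, by simp, by norm_num⟩
  · exact Ideal.subset_span ⟨3, by simp, by norm_num⟩
  · exact Ideal.subset_span ⟨1, by simp, by norm_num⟩
  · exact Ideal.subset_span ⟨0, by simp, by norm_num⟩

lemma aux_m8_le : mm ^ 8 ≤ I13 k ^ 2 := by
  have g1 : xx k ^ 4 ∈ I13 k := Ideal.subset_span (by simp)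
  have g2 : xx k ^ 3 * yy k ∈ I13 k := Ideal.subset_span (by simp)
  have g3 : xx k * yy k ^ 3 ∈ I13 k := Ideal.subset_span (by simp)
  have g4 : yy k ^ 4 ∈ I13 k := Ideal.subset_span (by simp)
  rw [aux_m_pow_span k 8, Ideal.span_le, pow_two]
  rintro x ⟨i, hi, rfl⟩
  simp only [Set.mem_Iic] at hi
  simp only [SetLike.mem_coe]
  interval_cases i
  · have h : xx k ^ 0 * yy k ^ (8 - 0) = yy k ^ 4 * yy k ^ 4 := by ring_nf
    rw [h]; exact Ideal.mul_mem_mul g4 g4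
  · have h : xx k ^ 1 * yy k ^ (8 - 1) = (xx k * yy k ^ 3) * yy k ^ 4 := by ring_nf
    rw [h]; exact Ideal.mul_mem_mul g3 g4
  · have h : xx k ^ 2 * yy k ^ (8 - 2) = (xx k * yy k ^ 3) * (xx k * yy k ^ 3) := by ring_nf
    rw [h]; exact Ideal.mul_mem_mul g3 g3
  · have h : xx k ^ 3 * yy k ^ (8 - 3) = (xx k ^ 3 * yy k) * yy k ^ 4 := by ring_nf
    rw [h]; exact Ideal.mul_mem_mul g2 g4
  · have h : xx k ^ 4 * yy k ^ (8 - 4) = (xx k ^ 3 * yy k) * (xx k * yy k ^ 3) := by ring_nf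
    rw [h]; exact Ideal.mul_mem_mul g2 g3
  · have h : xx k ^ 5 * yy k ^ (8 - 5) = xx k ^ 4 * (xx k * yy k ^ 3) := by ring_nf
    rw [h]; exact Ideal.mul_mem_mul g1 g3
  · have h : xx k ^ 6 * yy k ^ (8 - 6) = (xx k ^ 3 * yy k) * (xx k ^ 3 * yy k) := by ring_nf
    rw [h]; exact Ideal.mul_mem_mul g2 g2
  · have h : xx k ^ 7 * yy k ^ (8 - 7) = xx k ^ 4 * (xx k ^ 3 * yy k) := by ring_nf
    rw [h]; exact Ideal.mul_mem_mul g1 g2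
  · have h : xx k ^ 8 * yy k ^ (8 - 8) = xx k ^ 4 * xx k ^ 4 := by ring_nf
    rw [h]; exact Ideal.mul_mem_mul g1 g1

lemma aux_I2_eq : I13 k ^ 2 = mm ^ 8 := by
  apply le_antisymm
  · calc I13 k ^ 2 ≤ (mm ^ 4) ^ 2 := Ideal.pow_right_mono (aux_I13_le k) 2
      _ = mm ^ 8 := by rw [← pow_mul]
  · exact aux_m8_le k

lemma aux_Ipow_eq : ∀ n : ℕ, 2 ≤ n → I13 k ^ n = mm ^ (4 * n) := by
  intro n hn
  induction n, hn using Nat.le_induction with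
  | base => rw [aux_I2_eq]
  | succ n hn ih =>
    rw [pow_succ, ih]
    apply le_antisymm
    · calc mm ^ (4*n) * I13 k ≤ mm ^ (4*n) * mm ^ 4 := Ideal.mul_mono_right (aux_I13_le k)
        _ = mm ^ (4 * (n+1)) := by
            have h4 : 4 * n + 4 = 4 * (n + 1) := by ring
            rw [← pow_add, h4]
    · have h1 : mm ^ (4 * (n+1)) = mm ^ (4*n - 4) * mm ^ 8 := by
        rw [← pow_add]; congr 1; omega
      rw [h1, ← aux_I2_eq, pow_two, ← mul_assoc]
      apply Ideal.mul_mono_left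
      calc mm ^ (4*n-4) * I13 k ≤ mm ^ (4*n-4) * mm ^ 4 := Ideal.mul_mono_right (aux_I13_le k)
        _ = mm ^ (4*n) := by
            have h4 : 4 * n - 4 + 4 = 4 * n := by omega
            rw [← pow_add, h4]

lemma aux_hred (P : Ideal (Rloc k)) (r : Rloc k) :
    ∃ c : k, ∀ w ∈ P, r * w - sig k c * w ∈ mm * P := by
  obtain ⟨c, hc⟩ := aux_res k r
  refine ⟨c, fun w hw => ?_⟩
  have h : r * w - sig k c * w = (r - sig k c) * w := by ring
  rw [h]
  exact Ideal.mul_mem_mul hc hw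

lemma aux_qlen0 : qlen (mm * I13 k ^ 0) (I13 k ^ 0) = ((1:ℕ) : WithBot ℕ∞) := by
  apply aux_qlen_eq (sig k) _ _ (fun _ : Fin 1 => (1 : Rloc k))
  · intro i
    rw [pow_zero, Ideal.one_eq_top]
    exact Submodule.mem_top
  · exact aux_hred k _
  · have h : Ideal.span (Set.range fun _ : Fin 1 => (1 : Rloc k)) = ⊤ := by
      rw [Ideal.eq_top_iff_one]
      exact Ideal.subset_span ⟨0, rfl⟩
    rw [h]
    exact le_top
  · intro c hc i
    have hmem : (∑ j : Fin 1, sig k (c j) * (xx k ^ (0:ℕ) * yy k ^ (0:ℕ)))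
        ∈ Ideal.map φ (pXY ^ 1) := by
      have hsum : (∑ j : Fin 1, sig k (c j) * (xx k ^ (0:ℕ) * yy k ^ (0:ℕ)))
          = ∑ j : Fin 1, sig k (c j) * 1 := by norm_num
      rw [hsum, ← aux_max_pow_eq_map, pow_one]
      simpa using hc
    exact aux_indep k one_ne_zero (fun _ => 0) (fun _ => 0) (by norm_num)
      (fun i j _ _ => Subsingleton.elim i j) c hmem i

lemma aux_qlen1 : qlen (mm * I13 k ^ 1) (I13 k ^ 1) = ((4:ℕ) : WithBot ℕ∞) := by
  apply aux_qlen_eq (sig k) _ _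
    (![xx k ^ 4, xx k ^ 3 * yy k, xx k * yy k ^ 3, yy k ^ 4])
  · intro i
    rw [pow_one]
    fin_cases i <;> exact Ideal.subset_span (by simp)
  · exact aux_hred k _
  · rw [pow_one, I13, Ideal.span_le]
    rintro x (rfl | rfl | rfl | rfl)
    exacts [Ideal.subset_span ⟨0, rfl⟩, Ideal.subset_span ⟨1, rfl⟩,
      Ideal.subset_span ⟨2, rfl⟩, Ideal.subset_span ⟨3, rfl⟩]
  · intro c hc i
    have hconv : (∑ i, sig k (c i) * (![xx k ^ 4, xx k ^ 3 * yy k, xx k * yy k ^ 3, yy k ^ 4]) i)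
        = ∑ i, sig k (c i) * (xx k ^ (![4,3,1,0] i) * yy k ^ (![0,1,3,4] i)) := by
      apply Finset.sum_congr rfl
      intro j _
      fin_cases j <;> simp <;> try ring
    have hle : mm * I13 k ^ 1 ≤ Ideal.map φ (pXY ^ 5) := by
      rw [← aux_max_pow_eq_map, pow_one]
      calc mm * I13 k ≤ mm * mm ^ 4 := Ideal.mul_mono_right (aux_I13_le k)
        _ = mm ^ 5 := (pow_succ' _ _).symm
    exact aux_indep k (by norm_num) _ _ (by decide) (by decide) c (hle (hconv ▸ hc)) i

lemma aux_qlenn (n : ℕ) (hn : 2 ≤ n) :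
    qlen (mm * I13 k ^ n) (I13 k ^ n) = ((4 * n + 1 : ℕ) : WithBot ℕ∞) := by
  have hP : I13 k ^ n
      = Ideal.span ((fun i => xx k ^ i * yy k ^ (4*n - i)) '' Set.Iic (4*n)) := by
    rw [aux_Ipow_eq k n hn, aux_m_pow_span]
  apply aux_qlen_eq (sig k) _ _
    (fun i : Fin (4 * n + 1) => xx k ^ (i : ℕ) * yy k ^ (4 * n - (i : ℕ)))
  · intro i
    rw [hP]
    exact Ideal.subset_span ⟨(i:ℕ), by simp only [Set.mem_Iic]; omega, rfl⟩
  · exact aux_hred k _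
  · rw [hP, Ideal.span_le]
    rintro x ⟨i, hi, rfl⟩
    simp only [Set.mem_Iic] at hi
    exact Ideal.subset_span ⟨⟨i, by omega⟩, rfl⟩
  · intro c hc i
    have hle : mm * I13 k ^ n ≤ Ideal.map φ (pXY ^ (4*n+1)) := by
      rw [← aux_max_pow_eq_map, aux_Ipow_eq k n hn, ← pow_succ']
    refine aux_indep k (by omega) (fun i : Fin (4*n+1) => (i:ℕ)) (fun i => 4*n - (i:ℕ))
      ?_ ?_ c (hle hc) i
    · intro j
      show (j:ℕ) + (4 * n - (j:ℕ)) < 4 * n + 1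
      have := j.isLt
      omega
    · intro i j hij _; exact Fin.ext hij

end loc2


lemma aux_ps (μ : ℕ → ℕ) (h0 : μ 0 = 1) (h1 : μ 1 = 4) (hn : ∀ n, 2 ≤ n → μ n = 4 * n + 1) :
    PowerSeries.mk (fun n => (μ n : ℤ)) * (1 - PowerSeries.X) ^ 2 =
      1 + 2 * PowerSeries.X + 2 * PowerSeries.X ^ 2 - PowerSeries.X ^ 3 := by
  have hg : ∀ j : ℕ, (PowerSeries.coeff (R := ℤ) j) ((1 - PowerSeries.X) ^ 2)
      = if j = 0 then 1 else if j = 1 then -2 else if j = 2 then 1 else 0 := by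
    intro j
    have he : (1 - PowerSeries.X : PowerSeries ℤ) ^ 2 = 1 - (PowerSeries.X + PowerSeries.X) + PowerSeries.X ^ 2 := by ring
    rw [he]
    rw [map_add, map_sub, map_add, PowerSeries.coeff_one, PowerSeries.coeff_X,
      PowerSeries.coeff_X_pow]
    rcases j with _ | _ | _ | j <;> norm_num
  have hR : ∀ j : ℕ, (PowerSeries.coeff (R := ℤ) j)
      (1 + 2 * PowerSeries.X + 2 * PowerSeries.X ^ 2 - PowerSeries.X ^ 3 : PowerSeries ℤ)
      = if j = 0 then 1 else if j = 1 then 2 else if j = 2 then 2 else if j = 3 then -1 else 0 := by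
    intro j
    have he : (1 + 2 * PowerSeries.X + 2 * PowerSeries.X ^ 2 - PowerSeries.X ^ 3 : PowerSeries ℤ)
        = 1 + (PowerSeries.X + PowerSeries.X) + (PowerSeries.X ^ 2 + PowerSeries.X ^ 2) - PowerSeries.X ^ 3 := by ring
    rw [he]
    simp only [map_sub, map_add, PowerSeries.coeff_one, PowerSeries.coeff_X,
      PowerSeries.coeff_X_pow]
    rcases j with _ | _ | _ | _ | j
    · norm_num
    · norm_num
    · norm_num
    · norm_num
    · have h2 : ¬ (j + 1 + 1 + 1 + 1 = 2) := by omega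
      have h3 : ¬ (j + 1 + 1 + 1 + 1 = 3) := by omega
      simp [h2, h3]
  apply PowerSeries.ext
  intro n
  rw [PowerSeries.coeff_mul, Finset.Nat.sum_antidiagonal_eq_sum_range_succ_mk, hR]
  rcases n with _ | _ | _ | _ | n
  · rw [Finset.sum_range_one]
    simp [hg, h0]
  · rw [Finset.sum_range_succ, Finset.sum_range_one]
    rw [PowerSeries.coeff_mk, PowerSeries.coeff_mk, hg, hg]
    norm_num [h0, h1]
  · rw [Finset.sum_range_succ, Finset.sum_range_succ, Finset.sum_range_one]
    rw [PowerSeries.coeff_mk, PowerSeries.coeff_mk, PowerSeries.coeff_mk, hg, hg, hg]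
    norm_num [h0, h1, hn 2 (by norm_num)]
  · rw [Finset.sum_range_succ, Finset.sum_range_succ, Finset.sum_range_succ,
      Finset.sum_range_one]
    rw [PowerSeries.coeff_mk, PowerSeries.coeff_mk, PowerSeries.coeff_mk,
      PowerSeries.coeff_mk, hg, hg, hg, hg]
    norm_num [h0, h1, hn 2 (by norm_num), hn 3 (by norm_num)]
  · rw [Finset.sum_range_succ, Finset.sum_range_succ, Finset.sum_range_succ]
    have hzero : ∑ j ∈ Finset.range (n + 2),
        (PowerSeries.coeff (R := ℤ) j) (PowerSeries.mk fun n => (μ n : ℤ)) *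
          (PowerSeries.coeff (R := ℤ) (n + 4 - j)) ((1 - PowerSeries.X) ^ 2) = 0 := by
      apply Finset.sum_eq_zero
      intro j hj
      rw [Finset.mem_range] at hj
      rw [hg]
      rw [if_neg (by omega), if_neg (by omega), if_neg (by omega), mul_zero]
    rw [hzero]
    have e0 : n + 4 - (n + 3) = 1 := by omega
    have e1 : n + 4 - (n + 2) = 2 := by omega
    have e2 : n + 4 - (n + 4) = 0 := by omega
    rw [e0, e1, e2, PowerSeries.coeff_mk, PowerSeries.coeff_mk, PowerSeries.coeff_mk,
      hg 0, hg 1, hg 2]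
    rw [if_neg (show ¬ n + 4 = 0 by omega), if_neg (show ¬ n + 4 = 1 by omega),
      if_neg (show ¬ n + 4 = 2 by omega), if_neg (show ¬ n + 4 = 3 by omega)]
    have v2 := hn (n + 2) (by omega)
    have v3 := hn (n + 3) (by omega)
    have v4 := hn (n + 4) (by omega)
    rw [v2, v3, v4]
    norm_num
    push_cast
    ring

open PowerSeries in
/-- for `k` an infinite field, `R = k[x,y]` localized at `m = (x,y)` and
`I = (x⁴, x³y, xy³, y⁴)`, one has `Iⁿ = m^{4n}` for all `n ≥ 2`, `μ(I) = 4`, and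
`H(F(I),λ) = 1 + 4λ + Σ_{n≥2}(4n+1)λⁿ = (1 + 2λ + 2λ² − λ³)/(1 − λ)²`
(whose numerator has a negative coefficient). -/
theorem stmt13 {k : Type*} [Field k] [Infinite k]
    (μ : ℕ → ℕ)
    (hμ : ∀ n : ℕ, qlen (IsLocalRing.maximalIdeal (Rloc k) * I13 k ^ n) (I13 k ^ n) =
        (μ n : WithBot ℕ∞)) :
    (∀ n : ℕ, 2 ≤ n → I13 k ^ n = IsLocalRing.maximalIdeal (Rloc k) ^ (4 * n)) ∧
    μ 1 = 4 ∧
    (∀ n : ℕ, 2 ≤ n → μ n = 4 * n + 1) ∧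
    PowerSeries.mk (fun n => (μ n : ℤ)) * (1 - PowerSeries.X) ^ 2 =
      1 + 2 * PowerSeries.X + 2 * PowerSeries.X ^ 2 - PowerSeries.X ^ 3 := by
  constructor
  · exact aux_Ipow_eq k
  have hμ0 : μ 0 = 1 := by
    have h := (aux_qlen0 k).symm.trans (hμ 0)
    exact_mod_cast h.symm
  have hμ1 : μ 1 = 4 := by
    have h := (aux_qlen1 k).symm.trans (hμ 1)
    exact_mod_cast h.symm
  have hμn : ∀ n : ℕ, 2 ≤ n → μ n = 4 * n + 1 := by
    intro n hn
    have h := (aux_qlenn k n hn).symm.trans (hμ n)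
    exact_mod_cast h.symm
  exact ⟨hμ1, hμn, aux_ps μ hμ0 hμ1 hμn⟩
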